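/- Let d ≥ 1 and p ≥ 0, and let f : ℝ^d → ℝ be continuous with f(λx) = λ^p f(x) for all x ∈ ℝ^d and all λ ≥ 0. Then there exist a function θ : (0,∞) → [0,∞) with θ(ε) → 0 as ε → 0⁺ and, for every ε > 0, a constant K_ε ≥ 0, such that |f(x+y) − f(x)| ≤ θ(ε) ‖x‖^p + K_ε ‖y‖^p for all x, y ∈ ℝ^d. -/
import Mathlib

open Metric Set Real

/-- For `f : ℝ^d → ℝ` continuous and positively homogeneous of degree `p ≥ 0`,
there is `θ : (0,∞) → [0,∞)` with `θ(ε) → 0` as `ε → 0⁺` and for every `ε > 0` a constant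
`K_ε ≥ 0` such that `|f(x+y) − f(x)| ≤ θ(ε)‖x‖^p + K_ε‖y‖^p` for all `x, y`. -/
theorem stmt_2 (d : ℕ) (hd : 1 ≤ d) (p : ℝ) (hp : 0 ≤ p)
    (f : EuclideanSpace ℝ (Fin d) → ℝ) (hf : Continuous f)
    (hhom : ∀ l : ℝ, 0 ≤ l → ∀ x, f (l • x) = l ^ p * f x) :
    ∃ θ : ℝ → ℝ, (∀ ε : ℝ, 0 < ε → 0 ≤ θ ε) ∧
      Filter.Tendsto θ (nhdsWithin 0 (Set.Ioi 0)) (nhds 0) ∧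
      ∀ ε : ℝ, 0 < ε → ∃ K : ℝ, 0 ≤ K ∧
        ∀ x y : EuclideanSpace ℝ (Fin d),
          |f (x + y) - f x| ≤ θ ε * ‖x‖ ^ p + K * ‖y‖ ^ p := by
  classical
  rcases hp.eq_or_lt with hp0 | hp0
  · -- p = 0 : f is constant
    have hc : ∀ z, f z = f 0 := by
      intro z
      have h := hhom 0 le_rfl z
      rw [zero_smul, ← hp0, Real.rpow_zero, one_mul] at h
      exact h.symm
    refine ⟨fun _ => 0, fun _ _ => le_rfl, tendsto_const_nhds,
      fun ε hε => ⟨0, le_rfl, fun x y => ?_⟩⟩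
    simp [hc (x + y), hc x]
  · -- p > 0
    have hf0 : f 0 = 0 := by
      have h := hhom 0 le_rfl 0
      rw [zero_smul, Real.zero_rpow hp0.ne', zero_mul] at h
      exact h
    set g : EuclideanSpace ℝ (Fin d) × EuclideanSpace ℝ (Fin d) → ℝ := fun q => |f (q.1 + q.2) - f q.1| with hg_def
    have hg : Continuous g := by
      apply Continuous.abs
      exact ((hf.comp (continuous_fst.add continuous_snd)).sub (hf.comp continuous_fst))
    set A : ℝ → Set ℝ := fun ε => g '' ((closedBall (0:EuclideanSpace ℝ (Fin d)) 1) ×ˢ (closedBall (0:EuclideanSpace ℝ (Fin d)) ε)) with hA_def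
    set θ : ℝ → ℝ := fun ε => sSup (A ε) with hθ_def
    have hbdd : ∀ ε, BddAbove (A ε) := by
      intro ε
      exact ((isCompact_closedBall _ _).prod (isCompact_closedBall _ _)).bddAbove_image
        hg.continuousOn
    have hθnn : ∀ ε, 0 ≤ ε → 0 ≤ θ ε := by
      intro ε hε
      refine le_csSup (hbdd ε) ⟨(0, 0), ⟨mem_closedBall_self zero_le_one, mem_closedBall_self hε⟩, ?_⟩
      simp [hg_def]
    have hθle : ∀ ε, ∀ u v : EuclideanSpace ℝ (Fin d), ‖u‖ ≤ 1 → ‖v‖ ≤ ε → |f (u + v) - f u| ≤ θ ε := by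
      intro ε u v hu hv
      exact le_csSup (hbdd ε) ⟨(u, v), ⟨mem_closedBall_zero_iff.2 hu, mem_closedBall_zero_iff.2 hv⟩, rfl⟩
    -- tendsto
    have htend : Filter.Tendsto θ (nhdsWithin 0 (Set.Ioi 0)) (nhds 0) := by
      rw [Metric.tendsto_nhdsWithin_nhds]
      intro η hη
      have huc : UniformContinuousOn f (closedBall (0:EuclideanSpace ℝ (Fin d)) 2) :=
        (isCompact_closedBall _ _).uniformContinuousOn_of_continuous hf.continuousOn
      rw [Metric.uniformContinuousOn_iff] at huc
      obtain ⟨δ, hδ, hδ'⟩ := huc (η / 2) (half_pos hη)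
      refine ⟨min δ 1, lt_min hδ one_pos, ?_⟩
      intro ε hε hεd
      have hε0 : 0 < ε := hε
      rw [Real.dist_eq, sub_zero, abs_of_pos hε0] at hεd
      have hεδ : ε < δ := lt_of_lt_of_le hεd (min_le_left _ _)
      have hε1 : ε < 1 := lt_of_lt_of_le hεd (min_le_right _ _)
      rw [Real.dist_eq, sub_zero, abs_of_nonneg (hθnn ε hε0.le)]
      have : θ ε ≤ η / 2 := by
        apply Real.sSup_le _ (half_pos hη).le
        rintro z ⟨⟨u, v⟩, ⟨hu, hv⟩, rfl⟩
        rw [mem_closedBall_zero_iff] at hu hv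
        have h1 : u + v ∈ closedBall (0:EuclideanSpace ℝ (Fin d)) 2 := by
          rw [mem_closedBall_zero_iff]
          calc ‖u + v‖ ≤ ‖u‖ + ‖v‖ := norm_add_le _ _
            _ ≤ 1 + 1 := add_le_add hu (hv.trans hε1.le)
            _ = 2 := by norm_num
        have h2 : u ∈ closedBall (0:EuclideanSpace ℝ (Fin d)) 2 := by
          rw [mem_closedBall_zero_iff]; linarith
        have h3 : dist (u + v) u < δ := by
          rw [dist_eq_norm, add_sub_cancel_left]
          exact lt_of_le_of_lt hv hεδ
        have := hδ' (u + v) h1 u h2 h3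
        rw [Real.dist_eq] at this
        exact this.le
      linarith
    -- bound M
    set M : ℝ := sSup ((fun x => |f x|) '' closedBall (0:EuclideanSpace ℝ (Fin d)) 1) with hM_def
    have hMbdd : BddAbove ((fun x : EuclideanSpace ℝ (Fin d) => |f x|) '' closedBall (0:EuclideanSpace ℝ (Fin d)) 1) :=
      (isCompact_closedBall _ _).bddAbove_image hf.abs.continuousOn
    have hMle : ∀ x : EuclideanSpace ℝ (Fin d), ‖x‖ ≤ 1 → |f x| ≤ M := fun x hx =>
      le_csSup hMbdd ⟨x, mem_closedBall_zero_iff.2 hx, rfl⟩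
    have hM0 : 0 ≤ M := le_trans (abs_nonneg _) (hMle 0 (by simp))
    have hbound : ∀ x : EuclideanSpace ℝ (Fin d), |f x| ≤ M * ‖x‖ ^ p := by
      intro x
      by_cases hx : x = 0
      · simp [hx, hf0, Real.zero_rpow hp0.ne']
      · have hc : 0 < ‖x‖ := norm_pos_iff.2 hx
        set u : EuclideanSpace ℝ (Fin d) := ‖x‖⁻¹ • x with hu_def
        have hu : ‖u‖ = 1 := by
          rw [hu_def, norm_smul, norm_inv, norm_norm, inv_mul_cancel₀ hc.ne']
        have hxu : x = ‖x‖ • u := by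
          rw [hu_def, smul_smul, mul_inv_cancel₀ hc.ne', one_smul]
        have : f x = ‖x‖ ^ p * f u := by
          have h := hhom ‖x‖ (norm_nonneg x) u; rw [← hxu] at h; exact h
        rw [this, abs_mul, abs_of_nonneg (Real.rpow_nonneg (norm_nonneg _) _), mul_comm]
        exact mul_le_mul_of_nonneg_right (hMle u hu.le) (Real.rpow_nonneg (norm_nonneg _) _)
    refine ⟨θ, fun ε hε => hθnn ε hε.le, htend, ?_⟩
    intro ε hε
    refine ⟨M * ((1 + ε⁻¹) ^ p + ε⁻¹ ^ p), ?_, ?_⟩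
    · have h1 : (0:ℝ) ≤ (1 + ε⁻¹) ^ p := Real.rpow_nonneg (by positivity) _
      have h2 : (0:ℝ) ≤ ε⁻¹ ^ p := Real.rpow_nonneg (by positivity) _
      positivity
    intro x y
    set K := M * ((1 + ε⁻¹) ^ p + ε⁻¹ ^ p) with hK_def
    have hK0 : 0 ≤ K := by
      have h1 : (0:ℝ) ≤ (1 + ε⁻¹) ^ p := Real.rpow_nonneg (by positivity) _
      have h2 : (0:ℝ) ≤ ε⁻¹ ^ p := Real.rpow_nonneg (by positivity) _
      positivity
    by_cases hxy : ‖y‖ ≤ ε * ‖x‖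
    · by_cases hx : x = 0
      · have hy : y = 0 := by
          rw [hx] at hxy; simp at hxy
          exact norm_le_zero_iff.1 (by simpa using hxy)
        simp [hx, hy, hf0, Real.zero_rpow hp0.ne']
      · have hc : 0 < ‖x‖ := norm_pos_iff.2 hx
        set u : EuclideanSpace ℝ (Fin d) := ‖x‖⁻¹ • x with hu_def
        set v : EuclideanSpace ℝ (Fin d) := ‖x‖⁻¹ • y with hv_def
        have hu : ‖u‖ ≤ 1 := by
          rw [hu_def, norm_smul, norm_inv, norm_norm, inv_mul_cancel₀ hc.ne']
        have hv : ‖v‖ ≤ ε := by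
          rw [hv_def, norm_smul, norm_inv, norm_norm]
          rw [inv_mul_le_iff₀ hc]
          linarith [hxy]
        have hxu : x = ‖x‖ • u := by
          rw [hu_def, smul_smul, mul_inv_cancel₀ hc.ne', one_smul]
        have hyv : y = ‖x‖ • v := by
          rw [hv_def, smul_smul, mul_inv_cancel₀ hc.ne', one_smul]
        have hxy' : x + y = ‖x‖ • (u + v) := by rw [smul_add, ← hxu, ← hyv]
        have h1 : f (x + y) = ‖x‖ ^ p * f (u + v) := by
          have h := hhom ‖x‖ (norm_nonneg x) (u + v); rw [← hxy'] at h; exact h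
        have h2 : f x = ‖x‖ ^ p * f u := by
          have h := hhom ‖x‖ (norm_nonneg x) u; rw [← hxu] at h; exact h
        have hkey : |f (x + y) - f x| ≤ ‖x‖ ^ p * θ ε := by
          rw [h1, h2, ← mul_sub, abs_mul, abs_of_nonneg (Real.rpow_nonneg (norm_nonneg _) _)]
          exact mul_le_mul_of_nonneg_left (hθle ε u v hu hv) (Real.rpow_nonneg (norm_nonneg _) _)
        have hKy : 0 ≤ K * ‖y‖ ^ p := mul_nonneg hK0 (Real.rpow_nonneg (norm_nonneg _) _)
        calc |f (x + y) - f x| ≤ ‖x‖ ^ p * θ ε := hkey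
          _ = θ ε * ‖x‖ ^ p := mul_comm _ _
          _ ≤ θ ε * ‖x‖ ^ p + K * ‖y‖ ^ p := le_add_of_nonneg_right hKy
    · push_neg at hxy
      have hxley : ‖x‖ ≤ ε⁻¹ * ‖y‖ := by
        rw [← inv_mul_le_iff₀ (by positivity : (0:ℝ) < ε⁻¹)] at *
        · rw [inv_inv]; exact hxy.le
      have h1 : |f (x + y)| ≤ M * ((1 + ε⁻¹) * ‖y‖) ^ p := by
        refine (hbound _).trans (mul_le_mul_of_nonneg_left ?_ hM0)
        apply Real.rpow_le_rpow (norm_nonneg _) _ hp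
        calc ‖x + y‖ ≤ ‖x‖ + ‖y‖ := norm_add_le _ _
          _ ≤ ε⁻¹ * ‖y‖ + 1 * ‖y‖ := by rw [one_mul]; exact add_le_add hxley le_rfl
          _ = (1 + ε⁻¹) * ‖y‖ := by ring
      have h2 : |f x| ≤ M * (ε⁻¹ * ‖y‖) ^ p := by
        refine (hbound _).trans (mul_le_mul_of_nonneg_left ?_ hM0)
        exact Real.rpow_le_rpow (norm_nonneg _) hxley hp
      have hmr1 : ((1 + ε⁻¹) * ‖y‖) ^ p = (1 + ε⁻¹) ^ p * ‖y‖ ^ p :=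
        Real.mul_rpow (by positivity) (norm_nonneg _)
      have hmr2 : (ε⁻¹ * ‖y‖) ^ p = ε⁻¹ ^ p * ‖y‖ ^ p :=
        Real.mul_rpow (by positivity) (norm_nonneg _)
      have hθx : 0 ≤ θ ε * ‖x‖ ^ p :=
        mul_nonneg (hθnn ε hε.le) (Real.rpow_nonneg (norm_nonneg _) _)
      calc |f (x + y) - f x| ≤ |f (x + y)| + |f x| := abs_sub _ _
        _ ≤ M * ((1 + ε⁻¹) * ‖y‖) ^ p + M * (ε⁻¹ * ‖y‖) ^ p := add_le_add h1 h2
        _ = K * ‖y‖ ^ p := by rw [hmr1, hmr2, hK_def]; ring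
        _ ≤ θ ε * ‖x‖ ^ p + K * ‖y‖ ^ p := le_add_of_nonneg_left hθx
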